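/- For every fixed t ∈ ℝ, the function x ↦ Lf(x,t) (given by the explicit formula) has nonnegative x-derivative on (0, π): for x ∈ (0, π), ∂/∂x [Lf(x,t)] ≥ 0. -/

import Mathlib

open Real

/-- The explicit formula for `Lf(·,t)`. -/
noncomputable def LfFun (t x : ℝ) : ℝ :=
  2 * Real.sin (x / 2) *
      (1 + 2 * Real.exp (-2 * t) + Real.exp (-4 * t) * Real.sin (x / 2) ^ 2) /
      (1 + Real.exp (-2 * t) * Real.sin (x / 2) ^ 2
        + 2 * Real.cos (x / 2) ^ 2 * Real.exp (-2 * t))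
    - 4 * Real.exp t * Real.arctan (Real.exp (-t) * Real.sin (x / 2))
    + 2 * Real.sin (x / 2) / (1 + Real.exp (-2 * t) * Real.sin (x / 2) ^ 2)

theorem key_poly_7 (a u : ℝ) (ha : 0 ≤ a) (hu : 0 ≤ u) (hu1 : u ≤ 1) :
    (1+3*a*u)*(1+2*a-a*u)^2 ≤
      ((1+2*a)^2 + a*u*(1+2*a)*(1+3*a) - a^3*u^2)*(1+a*u)^2 := by
  nlinarith [mul_nonneg ha hu, mul_nonneg (mul_nonneg ha ha) hu,
    mul_nonneg (mul_nonneg (mul_nonneg ha ha) ha) hu,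
    mul_nonneg (mul_nonneg (mul_nonneg ha ha) hu) hu,
    mul_nonneg (mul_nonneg (mul_nonneg (mul_nonneg ha ha) (mul_nonneg ha ha)) hu) hu,
    mul_nonneg (mul_nonneg (mul_nonneg (mul_nonneg ha ha) ha) (mul_nonneg hu hu)) (by linarith : (0:ℝ) ≤ 25 - 2*u),
    mul_nonneg (mul_nonneg (mul_nonneg (mul_nonneg (mul_nonneg ha ha) (mul_nonneg ha ha)) ha) (mul_nonneg (mul_nonneg hu hu) hu)) (by linarith : (0:ℝ) ≤ 6 - u),
    mul_nonneg (mul_nonneg (mul_nonneg (mul_nonneg ha ha) (mul_nonneg ha ha)) (mul_nonneg hu hu)) hu]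

set_option maxHeartbeats 1600000 in
/-- For every fixed `t`, `x ↦ Lf(x,t)` has nonnegative derivative on `(0, π)`. -/
theorem stmt_7 (t x : ℝ) (hx : x ∈ Set.Ioo 0 Real.pi) :
    0 ≤ deriv (LfFun t) x := by
  obtain ⟨hx0, hxpi⟩ := hx
  have hpi := Real.pi_pos
  have hsin : 0 < Real.sin (x/2) :=
    Real.sin_pos_of_pos_of_lt_pi (by linarith) (by linarith)
  have hcos : 0 < Real.cos (x/2) :=
    Real.cos_pos_of_mem_Ioo ⟨by linarith, by linarith⟩
  have hsle : Real.sin (x/2) ^ 2 ≤ 1 := Real.sin_sq_le_one _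
  -- derivative computation
  have h2x : HasDerivAt (fun y : ℝ => y / 2) (1/2) x := by
    simpa using (hasDerivAt_id x).div_const 2
  have hs : HasDerivAt (fun y : ℝ => Real.sin (y/2)) (Real.cos (x/2) * (1/2)) x :=
    by have := (Real.hasDerivAt_sin (x/2)).comp x h2x; exact this
  have hc : HasDerivAt (fun y : ℝ => Real.cos (y/2)) (-Real.sin (x/2) * (1/2)) x :=
    by have := (Real.hasDerivAt_cos (x/2)).comp x h2x; exact this
  have hs2 := hs.pow 2
  have hD1pos : 0 < 1 + Real.exp (-2*t) * Real.sin (x/2) ^ 2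
      + 2 * Real.cos (x/2) ^ 2 * Real.exp (-2*t) := by positivity
  have hD2pos : 0 < 1 + Real.exp (-2*t) * Real.sin (x/2) ^ 2 := by positivity
  have hN := (hs2.const_mul (Real.exp (-4*t))).const_add (1 + 2*Real.exp (-2*t))
  have hD1 := ((hs2.const_mul (Real.exp (-2*t))).const_add 1).add
    (((hc.pow 2).const_mul 2).mul_const (Real.exp (-2*t)))
  have hD2 := (hs2.const_mul (Real.exp (-2*t))).const_add 1
  have hA := ((hs.const_mul 2).mul hN).div hD1 hD1pos.ne'
  have hat := (Real.hasDerivAt_arctan (Real.exp (-t) * Real.sin (x/2))).comp x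
    (hs.const_mul (Real.exp (-t)))
  have hB := hat.const_mul (4*Real.exp t)
  have hC := (hs.const_mul 2).div hD2 hD2pos.ne'
  have htot := (hA.sub hB).add hC
  simp only [Function.comp] at htot
  have hLf : LfFun t = fun y => 2 * Real.sin (y / 2) *
      (1 + 2 * Real.exp (-2 * t) + Real.exp (-4 * t) * Real.sin (y / 2) ^ 2) /
      (1 + Real.exp (-2 * t) * Real.sin (y / 2) ^ 2
        + 2 * Real.cos (y / 2) ^ 2 * Real.exp (-2 * t))
    - 4 * Real.exp t * Real.arctan (Real.exp (-t) * Real.sin (y / 2))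
    + 2 * Real.sin (y / 2) / (1 + Real.exp (-2 * t) * Real.sin (y / 2) ^ 2) := rfl
  have hd := htot.deriv
  change deriv (LfFun t) x = _ at hd
  simp only [Pi.pow_apply, Pi.add_apply, Pi.mul_apply, Pi.sub_apply, Pi.div_apply, -Nat.reduceSub, -Nat.cast_ofNat] at hd
  rw [hd]
  -- rewrite exponentials in terms of m = exp (-t)
  have hm : Real.exp (-t) ≠ 0 := (Real.exp_pos _).ne'
  have hmp : (0:ℝ) < Real.exp (-t) := Real.exp_pos _
  have h4e : Real.exp t = (Real.exp (-t))⁻¹ := by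
    rw [← Real.exp_neg]; ring_nf
  have hm2 : Real.exp (-2*t) = Real.exp (-t) * Real.exp (-t) := by
    rw [← Real.exp_add]; ring_nf
  have hm4 : Real.exp (-4*t) = (Real.exp (-t) * Real.exp (-t)) * (Real.exp (-t) * Real.exp (-t)) := by
    rw [← Real.exp_add, ← Real.exp_add]; ring_nf
  rw [h4e, hm4, hm2, Real.cos_sq']
  set m := Real.exp (-t) with hmdef
  set s := Real.sin (x/2) with hsdef
  set c := Real.cos (x/2) with hcdef
  have hD1ne : (1 + m * m * s ^ 2 + 2 * (1 - s ^ 2) * (m * m)) ≠ 0 := by nlinarith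
  have hD2ne : (1 + m * m * s ^ 2) ≠ 0 := by positivity
  have hDne : (1 + 2*(m*m) - (m*m)*s^2) ≠ 0 := by nlinarith
  have hATne : (1 + (m * s) ^ 2) ≠ 0 := by positivity
  have hEq : ((2 * (c * (1 / 2)) * (1 + 2 * (m*m) + (m*m)*(m*m) * s ^ 2) +
                2 * s * ((m*m)*(m*m) * (((2:ℕ):ℝ) * s ^ (2 - 1) * (c * (1 / 2))))) *
              (1 + (m*m) * s ^ 2 + 2 * (1 - s^2) * (m*m)) -
            2 * s * (1 + 2 * (m*m) + (m*m)*(m*m) * s ^ 2) *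
              ((m*m) * (((2:ℕ):ℝ) * s ^ (2 - 1) * (c * (1 / 2))) +
                2 * (((2:ℕ):ℝ) * c ^ (2 - 1) * (-s * (1 / 2))) * (m*m))) /
          (1 + (m*m) * s ^ 2 + 2 * (1 - s^2) * (m*m)) ^ 2 -
        4 * m⁻¹ * (1 / (1 + (m * s) ^ 2) * (m * (c * (1 / 2)))) +
      (2 * (c * (1 / 2)) * (1 + (m*m) * s ^ 2) -
          2 * s * ((m*m) * (((2:ℕ):ℝ) * s ^ (2 - 1) * (c * (1 / 2))))) /
        (1 + (m*m) * s ^ 2) ^ 2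
      = c * ((((1+2*(m*m))^2 + (m*m)*s^2*(1+2*(m*m))*(1+3*(m*m)) - (m*m)^3*(s^2)^2))
              / (1+2*(m*m) - (m*m)*s^2)^2
             - (1+3*(m*m)*s^2) / (1+(m*m)*s^2)^2) := by
    have h2 : ((2:ℕ):ℝ) = 2 := by norm_num
    field_simp
    ring
  rw [hEq]
  apply mul_nonneg hcos.le
  rw [sub_nonneg, div_le_div_iff₀ (by positivity) (by nlinarith)]
  nlinarith [key_poly_7 (m*m) (s^2) (by positivity) (by positivity) hsle]
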